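/- For the set-learning loss on nonempty subsets of a finite set Y with |Y| ≥ 2, and any hypothesis class H of functions X → 2^Y \ {∅} whose members only output singletons, GNdim(H, ℓ) equals the Natarajan dimension of H (viewing singleton outputs as elements of Y). -/

import Mathlib

open Classical in
/-- The set-learning 0-1 loss on subsets of `Y`. -/
noncomputable def setLoss {Y : Type*} (A B : Finset Y) : Fin 2 :=
  if A = B ∨ (A.card = 1 ∧ A ⊆ B) ∨ (B.card = 1 ∧ B ⊆ A) then 0 else 1

open Classical in
/-- `σ(A)`: the nonempty labels on which `A` incurs zero set-learning loss. -/
noncomputable def setSigma {Y : Type*} [Fintype Y] (A : Finset Y) : Finset (Finset Y) :=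
  Finset.univ.filter (fun B => B.Nonempty ∧ setLoss A B = 0)

/-- Natarajan shattering of a finite set `S` by a class `G` of functions. -/
def NShatters {X Z : Type*} [DecidableEq X] (G : Set (X → Z)) (S : Finset X) : Prop :=
  ∃ g₁ ∈ G, ∃ g₂ ∈ G, (∀ s ∈ S, g₁ s ≠ g₂ s) ∧
    ∀ S' ⊆ S, ∃ g ∈ G, (∀ s ∈ S', g s = g₁ s) ∧ ∀ s ∈ S \ S', g s = g₂ s

/-- Generalized Natarajan shattering: equality of labels is replaced by equality of σ-sets. -/
def GNShatters {X Y : Type*} [DecidableEq X] (σ : Y → Finset Y)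
    (H : Set (X → Y)) (S : Finset X) : Prop :=
  ∃ h₁ ∈ H, ∃ h₂ ∈ H, (∀ s ∈ S, σ (h₁ s) ≠ σ (h₂ s)) ∧
    ∀ S' ⊆ S, ∃ h ∈ H, (∀ s ∈ S', σ (h s) = σ (h₁ s)) ∧ ∀ s ∈ S \ S', σ (h s) = σ (h₂ s)

/-- The Natarajan dimension of a class `G`. -/
noncomputable def Ndim {X Z : Type*} [DecidableEq X] (G : Set (X → Z)) : ℕ∞ :=
  sSup {n : ℕ∞ | ∃ S : Finset X, (S.card : ℕ∞) = n ∧ NShatters G S}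

/-- The generalized Natarajan dimension of a class `H` with respect to `σ`. -/
noncomputable def GNdim {X Y : Type*} [DecidableEq X] (σ : Y → Finset Y)
    (H : Set (X → Y)) : ℕ∞ :=
  sSup {n : ℕ∞ | ∃ S : Finset X, (S.card : ℕ∞) = n ∧ GNShatters σ H S}

theorem setLearning_GNdim_eq_Ndim
    {X : Type*} [DecidableEq X]
    {Y : Type*} [Fintype Y] [DecidableEq Y]
    (hY : 2 ≤ Fintype.card Y)
    (H : Set (X → Finset Y)) (hsingle : ∀ h ∈ H, ∀ x : X, (h x).card = 1) :
    GNdim setSigma H = Ndim {g : X → Y | ∃ h ∈ H, ∀ x : X, h x = {g x}} := by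
  have hinj : ∀ a b : Y, setSigma ({a} : Finset Y) = setSigma {b} → a = b := by
    intro a b hab
    have hmem : ({a} : Finset Y) ∈ setSigma ({a} : Finset Y) := by
      simp [setSigma, setLoss]
    rw [hab] at hmem
    unfold setSigma at hmem
    rw [Finset.mem_filter] at hmem
    simp only [setLoss] at hmem
    rcases hmem with ⟨-, -, h0⟩
    by_contra hne
    have hba : ({b} : Finset Y) ≠ {a} := fun h => hne (Finset.singleton_injective h).symm
    have h1 : ¬(({b} : Finset Y) ⊆ {a}) := by
      intro h; exact hba (Finset.Subset.antisymm h (by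
        intro x hx
        simp only [Finset.mem_singleton] at hx ⊢
        subst hx
        have := h (Finset.mem_singleton_self b)
        simp only [Finset.mem_singleton] at this
        exact this.symm))
    have h2 : ¬(({a} : Finset Y) ⊆ {b}) := by
      intro h
      have := h (Finset.mem_singleton_self a)
      simp only [Finset.mem_singleton] at this
      exact hne this
    rw [if_neg (by push_neg; exact ⟨hba, fun _ => h1, fun _ => h2⟩)] at h0
    exact one_ne_zero h0
  set G : Set (X → Y) := {g : X → Y | ∃ h ∈ H, ∀ x : X, h x = {g x}} with hG
  have key : ∀ S : Finset X, GNShatters setSigma H S ↔ NShatters G S := by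
    intro S
    constructor
    · rintro ⟨h₁, hh₁, h₂, hh₂, hne, hsh⟩
      -- extract underlying functions
      have extract : ∀ h ∈ H, ∃ g : X → Y, (∀ x, h x = {g x}) := by
        intro h hh
        choose g hg using fun x => Finset.card_eq_one.mp (hsingle h hh x)
        exact ⟨g, hg⟩
      obtain ⟨g₁, hg₁⟩ := extract h₁ hh₁
      obtain ⟨g₂, hg₂⟩ := extract h₂ hh₂
      refine ⟨g₁, ⟨h₁, hh₁, hg₁⟩, g₂, ⟨h₂, hh₂, hg₂⟩, ?_, ?_⟩
      · intro s hs heq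
        exact hne s hs (by rw [hg₁ s, hg₂ s, heq])
      · intro S' hS'
        obtain ⟨h, hh, ha, hb⟩ := hsh S' hS'
        obtain ⟨g, hg⟩ := extract h hh
        refine ⟨g, ⟨h, hh, hg⟩, ?_, ?_⟩
        · intro s hs
          apply hinj
          rw [← hg s, ← hg₁ s]; exact ha s hs
        · intro s hs
          apply hinj
          rw [← hg s, ← hg₂ s]; exact hb s hs
    · rintro ⟨g₁, ⟨h₁, hh₁, hg₁⟩, g₂, ⟨h₂, hh₂, hg₂⟩, hne, hsh⟩
      refine ⟨h₁, hh₁, h₂, hh₂, ?_, ?_⟩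
      · intro s hs heq
        rw [hg₁ s, hg₂ s] at heq
        exact hne s hs (hinj _ _ heq)
      · intro S' hS'
        obtain ⟨g, ⟨h, hh, hg⟩, ha, hb⟩ := hsh S' hS'
        refine ⟨h, hh, ?_, ?_⟩
        · intro s hs; rw [hg s, hg₁ s, ha s hs]
        · intro s hs; rw [hg s, hg₂ s, hb s hs]
  unfold GNdim Ndim
  congr 1
  ext n
  simp only [Set.mem_setOf_eq, key]
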